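/- Mixed-radix FFT factorization: for α = (n_K,…,n₀), N = Π_{k=0}^{K} n_k, N_k = Π_{j=0}^{k} n_j, one has F_N = (Π_{k=0}^{K} D_{k,α}) S_α (product ordered with smaller indices on the right), where D_{k,α} = A_k^{-1}(I_{N/n_k} ⊗ F_{n_k}) Ŵ_k A_k, A_k = I_{N/N_k} ⊗ L^{N_k}_{n_k}, Ŵ_k = I_{N/N_k} ⊗ W^{N_k}_{n_k}. -/

import Mathlib

open Complex Matrix

/-- The N×N DFT matrix. -/
noncomputable def dftMat (N : ℕ) : Matrix (Fin N) (Fin N) ℂ :=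
  Matrix.of fun j l =>
    Complex.exp (-2 * Real.pi * Complex.I / N) ^ ((j : ℕ) * (l : ℕ))

/-- `I_{n/m} ⊗ F_m` as an n×n matrix. -/
noncomputable def idKronDFT (n m : ℕ) : Matrix (Fin n) (Fin n) ℂ :=
  Matrix.of fun r c =>
    if (r : ℕ) / m = (c : ℕ) / m then
      Complex.exp (-2 * Real.pi * Complex.I / m) ^ (((r : ℕ) % m) * ((c : ℕ) % m))
    else 0

/-- `I_{n/s} ⊗ L^s_k` as an n×n matrix (blocks of size `s`, stride `k` inside a block). -/
noncomputable def idKronStride (n s k : ℕ) : Matrix (Fin n) (Fin n) ℂ :=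
  Matrix.of fun r c =>
    if (r : ℕ) / s = (c : ℕ) / s ∧
        (r : ℕ) % s = (((c : ℕ) % s) % (s / k)) * k + ((c : ℕ) % s) / (s / k) then 1 else 0

/-- `I_{n/s} ⊗ W^s_d` as an n×n matrix. -/
noncomputable def idKronTwiddle (n s d : ℕ) : Matrix (Fin n) (Fin n) ℂ :=
  Matrix.diagonal fun x =>
    Complex.exp (-2 * Real.pi * Complex.I / s) ^ ((((x : ℕ) % s) / d) * (((x : ℕ) % s) % d))

/-- Digits of `x` in the mixed-radix system with radix list `L` (lowest first). -/
def mixedDigits : List ℕ → ℕ → List ℕ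
  | [], _ => []
  | b :: bs, x => (x % b) :: mixedDigits bs (x / b)

/-- Value of a digit list in the mixed-radix system with radix list `L`. -/
def ofMixedDigits : List ℕ → List ℕ → ℕ
  | [], _ => 0
  | _, [] => 0
  | b :: bs, d :: ds => d + b * ofMixedDigits bs ds

/-- Digit-reversal permutation `P_α`. -/
def revPerm (L : List ℕ) (x : ℕ) : ℕ :=
  ofMixedDigits L ((mixedDigits L.reverse x).reverse)

/-- Digit-reversal permutation matrix `S_α`. -/
noncomputable def smat (L : List ℕ) (n : ℕ) : Matrix (Fin n) (Fin n) ℂ :=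
  Matrix.of fun r c => if (r : ℕ) = revPerm L (c : ℕ) then 1 else 0



namespace FFTAux

noncomputable def root (S : ℕ) : ℂ := Complex.exp (-2 * Real.pi * Complex.I / S)

lemma root_pow_self {S : ℕ} (hS : 0 < S) : root S ^ S = 1 := by
  rw [root, ← Complex.exp_nat_mul]
  have h : (S:ℂ) ≠ 0 := Nat.cast_ne_zero.mpr hS.ne'
  have : (S:ℂ) * (-2 * Real.pi * Complex.I / S) = -(2 * Real.pi * Complex.I) := by
    field_simp
  rw [this, Complex.exp_neg, Complex.exp_two_pi_mul_I, inv_one]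

lemma pow_mod_eq {M : Type*} [Monoid M] (ω : M) (S : ℕ) (hω : ω ^ S = 1) (a : ℕ) :
    ω ^ a = ω ^ (a % S) := by
  conv_lhs => rw [← Nat.div_add_mod a S]
  rw [pow_add, pow_mul, hω, one_pow, one_mul]

lemma root_pow_congr {S : ℕ} (hS : 0 < S) {a b : ℕ} (h : a % S = b % S) :
    root S ^ a = root S ^ b := by
  rw [pow_mod_eq (root S) S (root_pow_self hS) a, h,
    ← pow_mod_eq (root S) S (root_pow_self hS) b]

lemma root_mul {s n : ℕ} (hs : 0 < s) (hn : 0 < n) :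
    root s = root (s * n) ^ n := by
  rw [root, root, ← Complex.exp_nat_mul]
  congr 1
  have h1 : (s:ℂ) ≠ 0 := Nat.cast_ne_zero.mpr hs.ne'
  have h2 : (n:ℂ) ≠ 0 := Nat.cast_ne_zero.mpr hn.ne'
  push_cast
  field_simp

lemma sum_collapse_left {N : ℕ} (g : Fin N → ℂ) (t : ℕ) (ht : t < N) :
    (∑ x : Fin N, (if (x:ℕ) = t then (1:ℂ) else 0) * g x) = g ⟨t, ht⟩ := by
  rw [Fintype.sum_eq_single (⟨t, ht⟩ : Fin N)]
  · simp
  · intro x hx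
    have : (x:ℕ) ≠ t := fun h => hx (Fin.ext h)
    simp [this]

lemma sum_collapse_right {N : ℕ} (g : Fin N → ℂ) (t : ℕ) (ht : t < N) :
    (∑ x : Fin N, g x * (if (x:ℕ) = t then (1:ℂ) else 0)) = g ⟨t, ht⟩ := by
  rw [Fintype.sum_eq_single (⟨t, ht⟩ : Fin N)]
  · simp
  · intro x hx
    have : (x:ℕ) ≠ t := fun h => hx (Fin.ext h)
    simp [this]

lemma mul_add_inj {s q1 q2 x1 x2 : ℕ} (h1 : x1 < s) (h2 : x2 < s) :
    q1 * s + x1 = q2 * s + x2 ↔ q1 = q2 ∧ x1 = x2 := by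
  constructor
  · intro h
    have hm := congrArg (· % s) h
    have hx : x1 = x2 := by
      simpa [Nat.mul_add_mod, Nat.mod_eq_of_lt h1, Nat.mod_eq_of_lt h2] using
        congrArg (· % s) (by omega : x1 + q1 * s = x2 + q2 * s)
    refine ⟨?_, hx⟩
    subst hx
    have hs : 0 < s := Nat.pos_of_ne_zero (by rintro rfl; omega)
    exact Nat.eq_of_mul_eq_mul_right hs (by omega)
  · rintro ⟨rfl, rfl⟩; rfl

end FFTAux

namespace FFTAux

noncomputable def Dmat (N s n : ℕ) : Matrix (Fin N) (Fin N) ℂ :=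
  Matrix.of fun r c =>
    if (r:ℕ)/s = (c:ℕ)/s ∧ (r:ℕ) % s % (s/n) = (c:ℕ) % s % (s/n) then
      root s ^ (((r:ℕ) % s) * (((c:ℕ) % s)/(s/n))) else 0

/-- the stride permutation as a function on indices -/
def strideF (s' n : ℕ) (c : ℕ) : ℕ :=
  (c/(s'*n))*(s'*n) + ((c % (s'*n) % s')*n + (c % (s'*n))/s')

lemma g_lt {s' n : ℕ} (hs' : 0 < s') {y : ℕ} (hy : y < s' * n) :
    (y % s')*n + y/s' < s' * n := by
  have h1 : y % s' + 1 ≤ s' := Nat.mod_lt _ hs'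
  have h2 : y / s' < n := Nat.div_lt_of_lt_mul hy
  calc (y % s')*n + y/s' < (y % s')*n + n := by omega
    _ = (y % s' + 1) * n := by ring
    _ ≤ s' * n := Nat.mul_le_mul_right _ h1

lemma strideF_mod {s' n : ℕ} (hs' : 0 < s') (hn : 0 < n) (c : ℕ) :
    strideF s' n c % (s' * n) = (c % (s'*n) % s')*n + (c % (s'*n))/s' := by
  have hsn : 0 < s' * n := Nat.mul_pos hs' hn
  have hg := g_lt hs' (Nat.mod_lt c hsn : c % (s'*n) < s'*n)
  rw [strideF, Nat.mul_comm (c/(s'*n)) (s'*n), Nat.mul_add_mod, Nat.mod_eq_of_lt hg]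

lemma strideF_div {s' n : ℕ} (hs' : 0 < s') (hn : 0 < n) (c : ℕ) :
    strideF s' n c / (s' * n) = c / (s' * n) := by
  have hsn : 0 < s' * n := Nat.mul_pos hs' hn
  have hg := g_lt hs' (Nat.mod_lt c hsn : c % (s'*n) < s'*n)
  rw [strideF, Nat.mul_comm (c/(s'*n)) (s'*n), Nat.mul_add_div hsn,
    Nat.div_eq_of_lt hg, Nat.add_zero]

lemma strideF_lt {N s' n : ℕ} (hs' : 0 < s') (hn : 0 < n) (hdvd : s' * n ∣ N)
    {c : ℕ} (hc : c < N) : strideF s' n c < N := by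
  obtain ⟨m, rfl⟩ := hdvd
  have hsn : 0 < s' * n := Nat.mul_pos hs' hn
  have hg := g_lt hs' (Nat.mod_lt c hsn : c % (s'*n) < s'*n)
  have hq : c / (s'*n) < m := by
    rw [Nat.div_lt_iff_lt_mul hsn]
    calc c < s' * n * m := hc
      _ = m * (s' * n) := by ring
  calc strideF s' n c < (c/(s'*n))*(s'*n) + s'*n := by rw [strideF]; omega
    _ = (c/(s'*n) + 1) * (s'*n) := by ring
    _ ≤ m * (s'*n) := Nat.mul_le_mul_right _ hq
    _ = s' * n * m := by ring

lemma strideF_inj {s' n : ℕ} (hs' : 0 < s') (hn : 0 < n) {a b : ℕ}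
    (h : strideF s' n a = strideF s' n b) : a = b := by
  have hsn : 0 < s' * n := Nat.mul_pos hs' hn
  have hdiv : a / (s'*n) = b / (s'*n) := by
    rw [← strideF_div hs' hn a, ← strideF_div hs' hn b, h]
  have hmod2 : (a % (s'*n) % s')*n + (a % (s'*n))/s'
      = (b % (s'*n) % s')*n + (b % (s'*n))/s' := by
    rw [← strideF_mod hs' hn a, ← strideF_mod hs' hn b, h]
  have ha2 : a % (s'*n) / s' < n := Nat.div_lt_of_lt_mul (Nat.mod_lt _ hsn)
  have hb2 : b % (s'*n) / s' < n := Nat.div_lt_of_lt_mul (Nat.mod_lt _ hsn)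
  obtain ⟨h1, h2⟩ := (mul_add_inj ha2 hb2).mp hmod2
  have hma' : a % (s'*n) = b % (s'*n) := by
    calc a % (s'*n) = s' * (a % (s'*n) / s') + a % (s'*n) % s' := (Nat.div_add_mod _ _).symm
      _ = s' * (b % (s'*n) / s') + b % (s'*n) % s' := by rw [h1, h2]
      _ = b % (s'*n) := Nat.div_add_mod _ _
  calc a = (s'*n) * (a / (s'*n)) + a % (s'*n) := (Nat.div_add_mod _ _).symm
    _ = (s'*n) * (b / (s'*n)) + b % (s'*n) := by rw [hdiv, hma']
    _ = b := Nat.div_add_mod _ _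

lemma stride_eq_perm {N s' n : ℕ} (hs' : 0 < s') (hn : 0 < n) :
    idKronStride N (s'*n) n =
      Matrix.of fun (r c : Fin N) => if (r:ℕ) = strideF s' n (c:ℕ) then (1:ℂ) else 0 := by
  ext r c
  simp only [idKronStride, Matrix.of_apply]
  have hd2 : s' * n / n = s' := Nat.mul_div_cancel _ hn
  rw [hd2]
  congr 1
  rw [eq_iff_iff]
  constructor
  · rintro ⟨h1, h2⟩
    rw [strideF]
    calc (r:ℕ) = (s'*n) * ((r:ℕ)/(s'*n)) + (r:ℕ)%(s'*n) := (Nat.div_add_mod _ _).symm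
      _ = (s'*n) * ((c:ℕ)/(s'*n)) + (((c:ℕ)%(s'*n)%s')*n + ((c:ℕ)%(s'*n))/s') := by
          rw [h1, h2]
      _ = (c:ℕ)/(s'*n)*(s'*n) + (((c:ℕ)%(s'*n)%s')*n + ((c:ℕ)%(s'*n))/s') := by ring
  · intro h
    rw [h, strideF_div hs' hn, strideF_mod hs' hn]
    exact ⟨rfl, rfl⟩

end FFTAux

namespace FFTAux

lemma permMat_transpose_mul {N : ℕ} (f : ℕ → ℕ) (hf : ∀ x : Fin N, f x < N)
    (M : Matrix (Fin N) (Fin N) ℂ) (r c : Fin N) :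
    ((Matrix.of fun (r c : Fin N) => if (r:ℕ) = f (c:ℕ) then (1:ℂ) else 0)ᵀ * M) r c
      = M ⟨f r, hf r⟩ c := by
  rw [Matrix.mul_apply]
  simp only [Matrix.transpose_apply, Matrix.of_apply]
  exact sum_collapse_left (fun x => M x c) (f r) (hf r)

lemma mul_permMat {N : ℕ} (f : ℕ → ℕ) (hf : ∀ x : Fin N, f x < N)
    (M : Matrix (Fin N) (Fin N) ℂ) (r c : Fin N) :
    (M * (Matrix.of fun (r c : Fin N) => if (r:ℕ) = f (c:ℕ) then (1:ℂ) else 0)) r c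
      = M r ⟨f c, hf c⟩ := by
  rw [Matrix.mul_apply]
  simp only [Matrix.of_apply]
  exact sum_collapse_right (fun x => M r x) (f c) (hf c)

lemma permMat_inv {N : ℕ} (f : ℕ → ℕ) (hf : ∀ x : Fin N, f x < N)
    (hinj : ∀ a b : ℕ, f a = f b → a = b) :
    (Matrix.of fun (r c : Fin N) => if (r:ℕ) = f (c:ℕ) then (1:ℂ) else 0)⁻¹
      = (Matrix.of fun (r c : Fin N) => if (r:ℕ) = f (c:ℕ) then (1:ℂ) else 0)ᵀ := by
  apply Matrix.inv_eq_left_inv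
  ext r c
  rw [permMat_transpose_mul f hf]
  simp only [Matrix.of_apply, Matrix.one_apply]
  by_cases h : r = c
  · subst h; simp
  · have hne : f (r:ℕ) ≠ f (c:ℕ) := fun he => h (Fin.ext (hinj _ _ he))
    simp [h, hne]

lemma strideF_divn {s' n : ℕ} (hs' : 0 < s') (hn : 0 < n) (c : ℕ) :
    strideF s' n c / n = (c/(s'*n))*s' + (c % (s'*n)) % s' := by
  have hsn : 0 < s' * n := Nat.mul_pos hs' hn
  have h2 : c % (s'*n) / s' < n := Nat.div_lt_of_lt_mul (Nat.mod_lt _ hsn)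
  have he : strideF s' n c
      = n * ((c/(s'*n))*s' + c % (s'*n) % s') + c % (s'*n)/s' := by rw [strideF]; ring
  rw [he, Nat.mul_add_div hn, Nat.div_eq_of_lt h2, Nat.add_zero]

lemma strideF_modn {s' n : ℕ} (hs' : 0 < s') (hn : 0 < n) (c : ℕ) :
    strideF s' n c % n = c % (s'*n) / s' := by
  have hsn : 0 < s' * n := Nat.mul_pos hs' hn
  have h2 : c % (s'*n) / s' < n := Nat.div_lt_of_lt_mul (Nat.mod_lt _ hsn)
  have he : strideF s' n c
      = n * ((c/(s'*n))*s' + c % (s'*n) % s') + c % (s'*n)/s' := by rw [strideF]; ring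
  rw [he, Nat.mul_add_mod, Nat.mod_eq_of_lt h2]

lemma D_eq {N s' n : ℕ} (hs' : 0 < s') (hn : 0 < n) (hdvd : s' * n ∣ N) :
    (idKronStride N (s'*n) n)⁻¹ * idKronDFT N n * idKronTwiddle N (s'*n) n *
      idKronStride N (s'*n) n = Dmat N (s'*n) n := by
  have hsn : 0 < s' * n := Nat.mul_pos hs' hn
  have hf : ∀ x : Fin N, strideF s' n (x:ℕ) < N := fun x => strideF_lt hs' hn hdvd x.isLt
  rw [stride_eq_perm hs' hn,
    permMat_inv (fun x => strideF s' n x) hf (fun a b => strideF_inj hs' hn)]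
  ext r c
  rw [mul_permMat _ hf, idKronTwiddle, Matrix.mul_diagonal, permMat_transpose_mul _ hf]
  simp only [idKronDFT, Dmat, Matrix.of_apply]
  have hdc : s' * n / n = s' := Nat.mul_div_cancel _ hn
  set a := (r:ℕ) % (s'*n) with ha
  set b := (c:ℕ) % (s'*n) with hb
  have hbs : b % s' < s' := Nat.mod_lt _ hs'
  have has : a % s' < s' := Nat.mod_lt _ hs'
  have hbd : b / s' < n := Nat.div_lt_of_lt_mul (Nat.mod_lt _ hsn)
  have hfc_mod : strideF s' n (c:ℕ) % (s'*n) = (b % s')*n + b/s' := strideF_mod hs' hn _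
  have htw1 : strideF s' n (c:ℕ) % (s'*n) / n = b % s' := by
    rw [hfc_mod]
    rw [show (b % s')*n + b/s' = n * (b % s') + b/s' by ring, Nat.mul_add_div hn,
      Nat.div_eq_of_lt hbd, Nat.add_zero]
  have htw2 : strideF s' n (c:ℕ) % (s'*n) % n = b / s' := by
    rw [hfc_mod, show (b % s')*n + b/s' = n * (b % s') + b/s' by ring, Nat.mul_add_mod,
      Nat.mod_eq_of_lt hbd]
  have hcond : (strideF s' n (r:ℕ) / n = strideF s' n (c:ℕ) / n)
      ↔ ((r:ℕ)/(s'*n) = (c:ℕ)/(s'*n) ∧ a % s' = b % s') := by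
    rw [strideF_divn hs' hn, strideF_divn hs' hn, ← ha, ← hb]
    exact mul_add_inj has hbs
  rw [htw1, htw2, strideF_modn hs' hn, strideF_modn hs' hn]
  simp only [hcond, hdc, ← ha, ← hb, show ∀ S : ℕ,
    Complex.exp (-2 * Real.pi * Complex.I / S) = root S from fun _ => rfl]
  split_ifs with h
  · rw [root_mul hn hs', mul_comm n s', ← pow_mul, ← pow_add]
    congr 1
    calc s' * (a/s' * (b/s')) + (b % s')*(b/s')
        = (s'*(a/s') + a % s')*(b/s') := by rw [← h.2]; ring
      _ = a * (b/s') := by rw [Nat.div_add_mod]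
  · exact zero_mul _

end FFTAux

namespace FFTAux

def rho (α : ℕ → ℕ) : ℕ → ℕ → ℕ
  | 0, _ => 0
  | m+1, y => y / (∏ j ∈ Finset.range m, α j)
      + α m * rho α m (y % (∏ j ∈ Finset.range m, α j))

lemma lt_of_div_block {N S x t : ℕ} (hdvd : S ∣ N) (hx : x < N) (ht : t < S) :
    (x/S)*S + t < N := by
  obtain ⟨m, rfl⟩ := hdvd
  have hS : 0 < S := by
    rcases Nat.eq_zero_or_pos S with h | h
    · subst h; simp at hx
    · exact h
  have hq : x / S < m := by
    rw [Nat.div_lt_iff_lt_mul hS]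
    calc x < S * m := hx
      _ = m * S := by ring
  calc (x/S)*S + t < (x/S)*S + S := by omega
    _ = (x/S + 1) * S := by ring
    _ ≤ m * S := Nat.mul_le_mul_right _ hq
    _ = S * m := by ring

lemma exp_split {s n u rm v p w : ℕ} (hu : u = s*w + rm) :
    (u*v + n*(rm*p)) % (s*n) = (u*(v + n*p)) % (s*n) := by
  subst hu
  have h : (s*w + rm)*(v + n*p) = ((s*w+rm)*v + n*(rm*p)) + (s*n)*(w*p) := by ring
  rw [h, Nat.add_mul_mod_self_left]

lemma prod_formula (K : ℕ) (α : ℕ → ℕ) (hα : ∀ k ≤ K, 0 < α k) (N : ℕ)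
    (hN : N = ∏ k ∈ Finset.range (K+1), α k) :
    ∀ m, m ≤ K + 1 → ∀ r c : Fin N,
    (((List.range m).reverse.map
        (fun k => Dmat N ((∏ j ∈ Finset.range k, α j) * α k) (α k))).prod) r c =
      if (r:ℕ)/(∏ j ∈ Finset.range m, α j) = (c:ℕ)/(∏ j ∈ Finset.range m, α j) then
        root (∏ j ∈ Finset.range m, α j) ^
          (((r:ℕ) % (∏ j ∈ Finset.range m, α j))
            * rho α m ((c:ℕ) % (∏ j ∈ Finset.range m, α j)))
      else 0 := by
  intro m
  induction m with
  | zero =>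
    intro _ r c
    simp [rho, Matrix.one_apply, Fin.ext_iff, root]
  | succ m ih =>
    intro hm r c
    have hmK : m ≤ K := by omega
    have hn : 0 < α m := hα m hmK
    have hs : 0 < ∏ j ∈ Finset.range m, α j :=
      Finset.prod_pos fun j hj => hα j (by have := Finset.mem_range.mp hj; omega)
    set s := ∏ j ∈ Finset.range m, α j with hsdef
    set n := α m with hndef
    have hSprod : ∏ j ∈ Finset.range (m+1), α j = s * n := Finset.prod_range_succ α m
    have hsn : 0 < s * n := Nat.mul_pos hs hn
    have hdvd : s * n ∣ N := by
      rw [hN, ← hSprod]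
      exact Finset.prod_dvd_prod_of_subset _ _ α
        (Finset.range_subset_range.mpr (by omega))
    have hlist : (List.range (m+1)).reverse.map
          (fun k => Dmat N ((∏ j ∈ Finset.range k, α j) * α k) (α k))
        = Dmat N (s * n) n :: ((List.range m).reverse.map
          (fun k => Dmat N ((∏ j ∈ Finset.range k, α j) * α k) (α k))) := by
      rw [List.range_succ, List.reverse_append, List.reverse_singleton]
      rfl
    rw [hlist, List.prod_cons, Matrix.mul_apply, hSprod]
    -- the unique surviving index
    have htlt : ((c:ℕ)/s % n)*s + (r:ℕ) % s < s * n := by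
      have h1 : (c:ℕ)/s % n < n := Nat.mod_lt _ hn
      have h2 : (r:ℕ) % s < s := Nat.mod_lt _ hs
      calc ((c:ℕ)/s % n)*s + (r:ℕ) % s < ((c:ℕ)/s % n)*s + s := by omega
        _ = ((c:ℕ)/s % n + 1)*s := by ring
        _ ≤ n * s := Nat.mul_le_mul_right _ h1
        _ = s * n := by ring
    set t := ((c:ℕ)/s % n)*s + (r:ℕ) % s with htdef
    have hx0lt : ((r:ℕ)/(s*n))*(s*n) + t < N := lt_of_div_block hdvd r.isLt htlt
    set x₀ : Fin N := ⟨((r:ℕ)/(s*n))*(s*n) + t, hx0lt⟩ with hx0def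
    have hdc : s * n / n = s := Nat.mul_div_cancel _ hn
    have hx0S : (x₀:ℕ) / (s*n) = (r:ℕ)/(s*n) := by
      show (((r:ℕ)/(s*n))*(s*n) + t) / (s*n) = (r:ℕ)/(s*n)
      rw [show ((r:ℕ)/(s*n))*(s*n) + t = (s*n) * ((r:ℕ)/(s*n)) + t by ring,
        Nat.mul_add_div hsn, Nat.div_eq_of_lt htlt, Nat.add_zero]
    have hx0modS : (x₀:ℕ) % (s*n) = t := by
      show (((r:ℕ)/(s*n))*(s*n) + t) % (s*n) = t
      rw [show ((r:ℕ)/(s*n))*(s*n) + t = (s*n) * ((r:ℕ)/(s*n)) + t by ring,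
        Nat.mul_add_mod, Nat.mod_eq_of_lt htlt]
    have hrms : (r:ℕ) % s < s := Nat.mod_lt _ hs
    have htmods : t % s = (r:ℕ) % s := by
      rw [htdef, show ((c:ℕ)/s % n)*s + (r:ℕ) % s = s * ((c:ℕ)/s % n) + (r:ℕ) % s by ring,
        Nat.mul_add_mod, Nat.mod_eq_of_lt hrms]
    have htdivs : t / s = (c:ℕ)/s % n := by
      rw [htdef, show ((c:ℕ)/s % n)*s + (r:ℕ) % s = s * ((c:ℕ)/s % n) + (r:ℕ) % s by ring,
        Nat.mul_add_div hs, Nat.div_eq_of_lt hrms, Nat.add_zero]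
    have hx0divs : (x₀:ℕ) / s = ((r:ℕ)/(s*n))*n + (c:ℕ)/s % n := by
      show (((r:ℕ)/(s*n))*(s*n) + t) / s = ((r:ℕ)/(s*n))*n + (c:ℕ)/s % n
      rw [htdef, show ((r:ℕ)/(s*n))*(s*n) + (((c:ℕ)/s % n)*s + (r:ℕ) % s)
          = s * (((r:ℕ)/(s*n))*n + (c:ℕ)/s % n) + (r:ℕ) % s by ring,
        Nat.mul_add_div hs, Nat.div_eq_of_lt hrms, Nat.add_zero]
    have hx0mods : (x₀:ℕ) % s = (r:ℕ) % s := by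
      show (((r:ℕ)/(s*n))*(s*n) + t) % s = (r:ℕ) % s
      rw [htdef, show ((r:ℕ)/(s*n))*(s*n) + (((c:ℕ)/s % n)*s + (r:ℕ) % s)
          = s * (((r:ℕ)/(s*n))*n + (c:ℕ)/s % n) + (r:ℕ) % s by ring,
        Nat.mul_add_mod, Nat.mod_eq_of_lt hrms]
    have hcs : (c:ℕ)/s = ((c:ℕ)/(s*n))*n + (c:ℕ)/s % n := by
      conv_lhs => rw [← Nat.div_add_mod ((c:ℕ)/s) n]
      rw [Nat.div_div_eq_div_mul]
      ring
    -- sum collapses to x₀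
    rw [Fintype.sum_eq_single x₀ ?uniq]
    case uniq =>
      intro x hx
      by_contra hterm
      apply hx
      -- both factors must be nonzero
      have h1 : ¬ (Dmat N (s*n) n r x = 0) := fun h0 => hterm (by rw [h0, zero_mul])
      have h2 : ¬ ((((List.range m).reverse.map
          (fun k => Dmat N ((∏ j ∈ Finset.range k, α j) * α k) (α k))).prod) x c = 0) :=
        fun h0 => hterm (by rw [h0, mul_zero])
      rw [ih (by omega) x c] at h2
      simp only [Dmat, Matrix.of_apply, hdc, ite_eq_right_iff, not_forall] at h1 h2
      obtain ⟨⟨hP1a, hP1b⟩, -⟩ := h1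
      obtain ⟨hP2, -⟩ := h2
      -- derive x = x₀
      apply Fin.ext
      have e1 : (x:ℕ) % (s*n) % s = (r:ℕ) % s := by
        rw [← hP1b, Nat.mod_mod_of_dvd _ (dvd_mul_right s n)]
      have e2 : (x:ℕ) % (s*n) / s = (c:ℕ)/s % n := by
        rw [Nat.mod_mul_right_div_self, hP2]
      calc (x:ℕ) = (s*n) * ((x:ℕ)/(s*n)) + (x:ℕ) % (s*n) := (Nat.div_add_mod _ _).symm
        _ = (s*n) * ((x:ℕ)/(s*n))
            + (s * ((x:ℕ) % (s*n) / s) + (x:ℕ) % (s*n) % s) := by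
              congr 1
              exact (Nat.div_add_mod _ _).symm
        _ = (s*n) * ((r:ℕ)/(s*n)) + (s * ((c:ℕ)/s % n) + (r:ℕ) % s) := by
              rw [e1, e2, hP1a]
        _ = (x₀:ℕ) := by show _ = ((r:ℕ)/(s*n))*(s*n) + t; rw [htdef]; ring
    -- now evaluate the term at x₀
    rw [ih (by omega) x₀ c]
    simp only [Dmat, Matrix.of_apply, hdc, hx0S, hx0divs, hx0mods, hx0modS, htmods, htdivs]
    have hrmod : (r:ℕ) % (s*n) % s = (r:ℕ) % s := Nat.mod_mod_of_dvd _ (dvd_mul_right s n)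
    have hcmoddiv : (c:ℕ) % (s*n) / s = (c:ℕ)/s % n := Nat.mod_mul_right_div_self _ _ _
    have hcmodmod : (c:ℕ) % (s*n) % s = (c:ℕ) % s := Nat.mod_mod_of_dvd _ (dvd_mul_right s n)
    have hcondiff : (((r:ℕ)/(s*n))*n + (c:ℕ)/s % n = (c:ℕ)/s)
        ↔ ((r:ℕ)/(s*n) = (c:ℕ)/(s*n)) := by
      constructor
      · intro h
        have hlt : (c:ℕ)/s % n < n := Nat.mod_lt _ hn
        have := (mul_add_inj hlt hlt).mp (h.trans hcs)
        exact this.1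
      · intro h; rw [h, ← hcs]
    have hrho : rho α (m+1) ((c:ℕ) % (s*n))
        = (c:ℕ)/s % n + n * rho α m ((c:ℕ) % s) := by
      show (c:ℕ) % (s*n) / s + α m * rho α m ((c:ℕ) % (s*n) % s) = _
      rw [hcmoddiv, hcmodmod, hndef]
    simp only [hcondiff, eq_self_iff_true, and_self, if_true, true_and]
    split_ifs with h
    · rw [hrho, root_mul hs hn, ← pow_mul, ← pow_add]
      refine root_pow_congr hsn ?_
      exact exp_split (by rw [← hrmod, Nat.div_add_mod])
    · exact mul_zero _

end FFTAux

namespace FFTAux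

lemma mixedDigits_length : ∀ (L : List ℕ) (x : ℕ), (mixedDigits L x).length = L.length
  | [], _ => rfl
  | b :: bs, x => by simp [mixedDigits, mixedDigits_length bs]

lemma ofMixedDigits_append : ∀ (M ds : List ℕ) (n e : ℕ), ds.length = M.length →
    ofMixedDigits (M ++ [n]) (ds ++ [e]) = ofMixedDigits M ds + M.prod * e
  | [], [], n, e, _ => by simp [ofMixedDigits]
  | b :: bs, d :: ds, n, e, h => by
      have ih := ofMixedDigits_append bs ds n e (by simpa using h)
      simp only [List.cons_append, ofMixedDigits, List.append_eq] at *
      rw [ih, List.prod_cons]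
      ring
  | [], _ :: _, _, _, h => by simp at h
  | _ :: _, [], _, _, h => by simp at h

lemma revPerm_append (M : List ℕ) (n x : ℕ) :
    revPerm (M ++ [n]) x = revPerm M (x/n) + M.prod * (x%n) := by
  rw [revPerm, revPerm]
  have h1 : (M ++ [n]).reverse = n :: M.reverse := by simp
  rw [h1]
  show ofMixedDigits (M ++ [n]) ((mixedDigits (n :: M.reverse) x).reverse) = _
  rw [mixedDigits, List.reverse_cons]
  exact ofMixedDigits_append M _ n (x%n)
    (by rw [List.length_reverse, mixedDigits_length, List.length_reverse])

lemma revPerm_lt (M : List ℕ) (hM : ∀ b ∈ M, 0 < b) (x : ℕ) : revPerm M x < M.prod := by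
  induction M using List.reverseRecOn generalizing x with
  | nil => simp [revPerm, mixedDigits, ofMixedDigits]
  | append_singleton M n ih =>
    have hn : 0 < n := hM n (by simp)
    have hM' : ∀ b ∈ M, 0 < b := fun b hb => hM b (by simp [hb])
    rw [revPerm_append, List.prod_append, List.prod_singleton]
    have h1 : revPerm M (x/n) < M.prod := ih hM' _
    have h2 : x % n + 1 ≤ n := Nat.mod_lt _ hn
    calc revPerm M (x/n) + M.prod * (x%n) < M.prod + M.prod * (x%n) := by omega
      _ = M.prod * (x%n + 1) := by ring
      _ ≤ M.prod * n := Nat.mul_le_mul_left _ h2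

lemma rho_revPerm (α : ℕ → ℕ) :
    ∀ m, (∀ k, k < m → 0 < α k) → ∀ x, x < ∏ j ∈ Finset.range m, α j →
      rho α m (revPerm ((List.range m).map α) x) = x := by
  intro m
  induction m with
  | zero =>
    intro _ x hx
    simp only [Finset.range_zero, Finset.prod_empty, Nat.lt_one_iff] at hx
    simp [rho, hx]
  | succ m ih =>
    intro hpos x hx
    have hn : 0 < α m := hpos m (by omega)
    have hs : 0 < ∏ j ∈ Finset.range m, α j :=
      Finset.prod_pos fun j hj => hpos j (by have := Finset.mem_range.mp hj; omega)
    set s := ∏ j ∈ Finset.range m, α j with hsdef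
    have hL : (List.range (m+1)).map α = (List.range m).map α ++ [α m] := by
      rw [List.range_succ, List.map_append, List.map_singleton]
    have hprodM : ((List.range m).map α).prod = s := rfl
    rw [hL, revPerm_append, hprodM]
    have hrv : revPerm ((List.range m).map α) (x / α m) < s := by
      have := revPerm_lt ((List.range m).map α)
        (fun b hb => by
          obtain ⟨j, hj, rfl⟩ := List.mem_map.mp hb
          exact hpos j (by have := List.mem_range.mp hj; omega)) (x / α m)
      rwa [hprodM] at this
    set rv := revPerm ((List.range m).map α) (x / α m) with hrvdef
    show (rv + s * (x % α m)) / s + α m * rho α m ((rv + s * (x % α m)) % s) = x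
    rw [Nat.add_mul_div_left _ _ hs, Nat.div_eq_of_lt hrv, Nat.zero_add,
      Nat.add_mul_mod_self_left, Nat.mod_eq_of_lt hrv]
    have hxn : x / α m < s := by
      apply Nat.div_lt_of_lt_mul
      rw [Finset.prod_range_succ] at hx
      calc x < s * α m := hx
        _ = α m * s := by ring
    rw [ih (fun k hk => hpos k (by omega)) (x / α m) hxn, Nat.mod_add_div]

end FFTAux

/-- Mixed-radix FFT factorization: `F_N = (D_K ⋯ D_1 D_0) S_α` with
`D_k = A_k⁻¹ (I_{N/n_k} ⊗ F_{n_k}) Ŵ_k A_k`, `A_k = I_{N/N_k} ⊗ L^{N_k}_{n_k}`,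
`Ŵ_k = I_{N/N_k} ⊗ W^{N_k}_{n_k}`. -/
theorem stmt9 (K : ℕ) (α : ℕ → ℕ) (hα : ∀ k ≤ K, 0 < α k)
    (N : ℕ) (hN : N = ∏ k ∈ Finset.range (K + 1), α k)
    (Nk : ℕ → ℕ) (hNk : ∀ k, Nk k = ∏ j ∈ Finset.range (k + 1), α j)
    (A W D : ℕ → Matrix (Fin N) (Fin N) ℂ)
    (hA : ∀ k, A k = idKronStride N (Nk k) (α k))
    (hW : ∀ k, W k = idKronTwiddle N (Nk k) (α k))
    (hD : ∀ k, D k = (A k)⁻¹ * idKronDFT N (α k) * W k * A k) :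
    dftMat N = ((List.range (K + 1)).reverse.map D).prod *
      smat ((List.range (K + 1)).map α) N := by
  have hDk : ∀ k ∈ (List.range (K+1)).reverse,
      D k = FFTAux.Dmat N ((∏ j ∈ Finset.range k, α j) * α k) (α k) := by
    intro k hk
    have hkK : k ≤ K := by
      have := List.mem_range.mp (List.mem_reverse.mp hk); omega
    have hsk : Nk k = (∏ j ∈ Finset.range k, α j) * α k := by
      rw [hNk, Finset.prod_range_succ]
    have hs' : 0 < ∏ j ∈ Finset.range k, α j :=
      Finset.prod_pos fun j hj => hα j (by have := Finset.mem_range.mp hj; omega)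
    have hdvd : (∏ j ∈ Finset.range k, α j) * α k ∣ N := by
      rw [hN, ← Finset.prod_range_succ]
      exact Finset.prod_dvd_prod_of_subset _ _ α (Finset.range_subset_range.mpr (by omega))
    rw [hD, hA, hW, hsk]
    exact FFTAux.D_eq hs' (hα k hkK) hdvd
  rw [List.map_congr_left hDk]
  have hLpos : ∀ b ∈ (List.range (K+1)).map α, 0 < b := by
    intro b hb
    obtain ⟨j, hj, rfl⟩ := List.mem_map.mp hb
    exact hα j (by have := List.mem_range.mp hj; omega)
  have hLprod : ((List.range (K+1)).map α).prod = N := by rw [hN]; rfl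
  ext r c
  have ht : revPerm ((List.range (K+1)).map α) (c:ℕ) < N := by
    have := FFTAux.revPerm_lt _ hLpos (c:ℕ)
    rwa [hLprod] at this
  rw [Matrix.mul_apply]
  simp only [smat, Matrix.of_apply]
  rw [FFTAux.sum_collapse_right _ _ ht,
    FFTAux.prod_formula K α hα N hN (K+1) le_rfl r ⟨_, ht⟩]
  have hc : (c:ℕ) < ∏ j ∈ Finset.range (K+1), α j := hN ▸ c.isLt
  have hrho := FFTAux.rho_revPerm α (K+1) (fun k hk => hα k (by omega)) (c:ℕ) hc
  simp only [← hN, Fin.val_mk]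
  rw [Nat.div_eq_of_lt r.isLt, Nat.div_eq_of_lt ht, if_pos rfl,
    Nat.mod_eq_of_lt r.isLt, Nat.mod_eq_of_lt ht, hrho]
  rfl
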